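/- Let X₁, …, Xₙ be i.i.d. real-valued random variables with common distribution D having CDF F, let α ∈ (0,1), Δ > 0 with α − Δ > 0, and β ∈ (0,1). Define the population quantile q_τ := inf{x : F(x) ≥ τ} and the empirical quantile q̂_α := inf{x : #{i : Xᵢ ≤ x} ≥ α·n}. If n ≥ (1/(2Δ²))·log(1/β), then Pr( q̂_α < q_{α−Δ} ) ≤ β. -/

import Mathlib

open MeasureTheory ProbabilityTheory

/-- The CDF of a distribution `D` on `ℝ`. -/
noncomputable def distCdf (D : Measure ℝ) (x : ℝ) : ℝ := (D (Set.Iic x)).toReal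

/-- The population `τ`-quantile `q_τ := inf {x : F(x) ≥ τ}`. -/
noncomputable def popQuantile (D : Measure ℝ) (τ : ℝ) : ℝ :=
  sInf {x : ℝ | τ ≤ distCdf D x}

/-- The empirical `γ`-quantile `q̂_γ := inf {x : #{i : Xᵢ ≤ x} ≥ γ·n}`. -/
noncomputable def empQuantile {n : ℕ} (X : Fin n → ℝ) (γ : ℝ) : ℝ :=
  sInf {x : ℝ | γ * (n : ℝ) ≤ ((Finset.univ.filter (fun i => X i ≤ x)).card : ℝ)}

open Real in
lemma bernoulli_mgf_bound {p t : ℝ} (hp0 : 0 ≤ p) (hp1 : p ≤ 1) (ht : 0 ≤ t) :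
    p * Real.exp t + (1 - p) ≤ Real.exp (t ^ 2 / 8 + t * p) := by
  set u : ℝ → ℝ := fun s => p * Real.exp s + (1 - p) with hu_def
  have hu : ∀ s, 0 < u s := by
    intro s
    rcases eq_or_lt_of_le hp1 with h | h
    · simp only [hu_def, h]; simpa using exp_pos s
    · have := exp_pos s; simp only [hu_def]; nlinarith
  have hud : ∀ s, HasDerivAt u (p * Real.exp s) s := by
    intro s
    exact ((Real.hasDerivAt_exp s).const_mul p).add_const (1 - p)
  set g : ℝ → ℝ := fun s => s / 4 + p - p * Real.exp s / u s with hg_def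
  set f : ℝ → ℝ := fun s => s ^ 2 / 8 + s * p - Real.log (u s) with hf_def
  have hgd : ∀ s, HasDerivAt g
      (1 / 4 - (p * Real.exp s * u s - p * Real.exp s * (p * Real.exp s)) / (u s) ^ 2) s := by
    intro s
    have h1 : HasDerivAt (fun s => p * Real.exp s) (p * Real.exp s) s :=
      (Real.hasDerivAt_exp s).const_mul p
    have h2 : HasDerivAt (fun s => p * Real.exp s / u s)
        ((p * Real.exp s * u s - p * Real.exp s * (p * Real.exp s)) / (u s) ^ 2) s :=
      h1.div (hud s) (hu s).ne'
    have h3 : HasDerivAt (fun s : ℝ => s / 4 + p) (1 / 4) s := by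
      simpa using (hasDerivAt_id s).div_const 4 |>.add_const p
    exact h3.sub h2
  have hg'_nonneg : ∀ s, 0 ≤ 1 / 4 -
      (p * Real.exp s * u s - p * Real.exp s * (p * Real.exp s)) / (u s) ^ 2 := by
    intro s
    rw [sub_nonneg, div_le_iff₀ (pow_pos (hu s) 2)]
    have h := hu s
    have he := exp_pos s
    simp only [hu_def] at *
    nlinarith [sq_nonneg (p * Real.exp s - (1 - p))]
  have hgmono : Monotone g :=
    monotone_of_deriv_nonneg (fun s => (hgd s).differentiableAt)
      (fun s => by rw [(hgd s).deriv]; exact hg'_nonneg s)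
  have hg0 : g 0 = 0 := by
    simp [hg_def, hu_def]
  have hgnn : ∀ s, 0 ≤ s → 0 ≤ g s := fun s hs => hg0 ▸ hgmono hs
  have hfd : ∀ s, HasDerivAt f (g s) s := by
    intro s
    have h1 : HasDerivAt (fun s : ℝ => s ^ 2 / 8 + s * p) (s / 4 + p) s := by
      have := ((hasDerivAt_pow 2 s).div_const 8).add ((hasDerivAt_id s).mul_const p)
      exact this.congr_deriv (by simp only [Nat.reduceSub, pow_one, Nat.cast_ofNat]; ring)
    have h2 : HasDerivAt (fun s => Real.log (u s)) (p * Real.exp s / u s) s :=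
      (hud s).log (hu s).ne'
    exact h1.sub h2
  have hfmono : MonotoneOn f (Set.Ici (0 : ℝ)) := by
    refine monotoneOn_of_deriv_nonneg (convex_Ici 0)
      (Continuous.continuousOn (by fun_prop (disch := exact fun s => (hu s).ne'))) ?_ ?_
    · exact fun s _ => (hfd s).differentiableAt.differentiableWithinAt
    · intro s hs
      rw [(hfd s).deriv]
      exact hgnn s (le_of_lt (by simpa using hs))
  have hf0 : f 0 = 0 := by simp [hf_def, hu_def]
  have hft : 0 ≤ f t := by
    have := hfmono (Set.self_mem_Ici) (Set.mem_Ici.mpr ht) ht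
    rw [hf0] at this; exact this
  have : Real.log (u t) ≤ t ^ 2 / 8 + t * p := by
    simp only [hf_def] at hft; linarith
  calc u t ≤ Real.exp (Real.log (u t)) := le_of_eq (Real.exp_log (hu t)).symm
    _ ≤ _ := Real.exp_le_exp.mpr this


/-- For i.i.d. samples from `D`, if `n ≥ (1/(2Δ²))·log(1/β)` then
the empirical `α`-quantile falls below the population `(α−Δ)`-quantile with
probability at most `β`. -/
theorem empirical_quantile_lower_shift
    {Ω : Type*} [MeasurableSpace Ω] (μ : Measure Ω) [IsProbabilityMeasure μ]
    (n : ℕ) (X : Fin n → Ω → ℝ) (hmeas : ∀ i, Measurable (X i))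
    (D : Measure ℝ) [IsProbabilityMeasure D]
    (hindep : iIndepFun X μ)
    (hid : ∀ i, Measure.map (X i) μ = D)
    (α Δ β : ℝ) (hα : α ∈ Set.Ioo (0 : ℝ) 1) (hΔ : 0 < Δ) (hαΔ : 0 < α - Δ)
    (hβ : β ∈ Set.Ioo (0 : ℝ) 1)
    (hn : (n : ℝ) ≥ (1 / (2 * Δ ^ 2)) * Real.log (1 / β)) :
    μ {ω | empQuantile (fun i => X i ω) α < popQuantile D (α - Δ)}
      ≤ ENNReal.ofReal β := by
  obtain ⟨hα0, hα1⟩ := hα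
  obtain ⟨hβ0, hβ1⟩ := hβ
  set q := popQuantile D (α - Δ) with hq_def
  -- n is positive
  have hlogβ : 0 < Real.log (1 / β) := Real.log_pos (by rw [lt_div_iff₀ hβ0]; linarith)
  have hnpos : 0 < (n : ℝ) := lt_of_lt_of_le (by positivity) hn
  have hn0 : 0 < n := by exact_mod_cast hnpos
  haveI : Nonempty (Fin n) := ⟨⟨0, hn0⟩⟩
  -- key CDF bound at q
  have hkey : (D (Set.Iio q)).toReal ≤ α - Δ := by
    have hcdf : ∀ x, distCdf D x = cdf D x := fun x => (cdf_eq_real D x).symm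
    -- the defining set is bounded below
    have hbdd : BddBelow {x : ℝ | α - Δ ≤ distCdf D x} := by
      obtain ⟨x₀, hx₀⟩ := (tendsto_cdf_atBot (μ := D)).eventually_lt_const hαΔ |>.exists
      refine ⟨x₀, fun x hx => ?_⟩
      by_contra hxx
      push_neg at hxx
      have : cdf D x ≤ cdf D x₀ := monotone_cdf (μ := D) hxx.le
      rw [Set.mem_setOf_eq, hcdf] at hx
      linarith
    have hlt : ∀ x, x < q → D (Set.Iic x) ≤ ENNReal.ofReal (α - Δ) := by
      intro x hx
      have hnotin : ¬ (α - Δ ≤ distCdf D x) := fun h => absurd (csInf_le hbdd h) (not_le.mpr hx)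
      push_neg at hnotin
      rw [ENNReal.le_ofReal_iff_toReal_le (measure_ne_top D _) hαΔ.le]
      exact le_of_lt hnotin
    have hunion : Set.Iio q = ⋃ k : ℕ, Set.Iic (q - 1 / (k + 1)) := by
      ext x
      simp only [Set.mem_Iio, Set.mem_iUnion, Set.mem_Iic]
      constructor
      · intro hx
        obtain ⟨k, hk⟩ := exists_nat_one_div_lt (sub_pos.mpr hx)
        exact ⟨k, by push_cast at hk ⊢; linarith⟩
      · rintro ⟨k, hk⟩
        have : (0 : ℝ) < 1 / (k + 1) := by positivity
        linarith
    have hmono : Monotone (fun k : ℕ => Set.Iic (q - 1 / ((k : ℝ) + 1))) := by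
      intro k l hkl
      apply Set.Iic_subset_Iic.mpr
      have : (1 : ℝ) / (l + 1) ≤ 1 / (k + 1) := by
        apply one_div_le_one_div_of_le (by positivity)
        exact_mod_cast by omega
      linarith
    have : D (Set.Iio q) ≤ ENNReal.ofReal (α - Δ) := by
      rw [hunion, hmono.measure_iUnion]
      refine iSup_le fun k => hlt _ ?_
      have : (0 : ℝ) < 1 / ((k : ℝ) + 1) := by positivity
      linarith
    calc (D (Set.Iio q)).toReal ≤ (ENNReal.ofReal (α - Δ)).toReal :=
          ENNReal.toReal_mono ENNReal.ofReal_ne_top this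
      _ = α - Δ := ENNReal.toReal_ofReal hαΔ.le
  -- indicator variables
  set g : ℝ → ℝ := fun x => if x < q then 1 else 0 with hg_def
  have hgmeas : Measurable g := by
    have : g = Set.indicator (Set.Iio q) (fun _ => (1 : ℝ)) := by
      funext x; simp [hg_def, Set.indicator_apply]
    rw [this]
    exact (measurable_const.indicator measurableSet_Iio)
  set Y : Fin n → Ω → ℝ := fun i ω => g (X i ω) with hY_def
  have hYmeas : ∀ i, Measurable (Y i) := fun i => hgmeas.comp (hmeas i)
  have hYindep : iIndepFun Y μ :=
    hindep.comp _ (fun _ => hgmeas)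
  -- event inclusion
  have hsub : {ω | empQuantile (fun i => X i ω) α < q}
      ⊆ {ω | α * n ≤ (∑ i, Y i) ω} := by
    intro ω hω
    simp only [Set.mem_setOf_eq] at hω ⊢
    set v : Fin n → ℝ := fun i => X i ω with hv
    set S : Set ℝ :=
      {x | α * n ≤ ((Finset.univ.filter (fun i => v i ≤ x)).card : ℝ)} with hS
    have hωS : sInf S < q := hω
    have hSne : S.Nonempty := by
      obtain ⟨M, hM⟩ := Finite.exists_le v
      refine ⟨M, ?_⟩
      have hfM : (Finset.univ.filter (fun i => v i ≤ M)) = Finset.univ := by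
        ext i; simp [hM i]
      simp only [hS, Set.mem_setOf_eq, hfM, Finset.card_univ, Fintype.card_fin]
      nlinarith
    have hSbdd : BddBelow S := by
      obtain ⟨m, hm⟩ := Finite.exists_le (fun i => -v i)
      refine ⟨-m, fun x hx => ?_⟩
      by_contra hxm
      push_neg at hxm
      have hf0 : (Finset.univ.filter (fun i => v i ≤ x)) = ∅ := by
        ext i
        simp only [Finset.mem_filter, Finset.mem_univ, true_and, Finset.notMem_empty,
          iff_false]
        have := hm i
        push_neg
        linarith
      rw [Set.mem_setOf_eq, hf0] at hx
      simp only [Finset.card_empty, Nat.cast_zero] at hx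
      nlinarith
    obtain ⟨y, hyS, hyq⟩ := (csInf_lt_iff hSbdd hSne).mp hωS
    have hcard : ((Finset.univ.filter (fun i => v i ≤ y)).card : ℝ)
        ≤ ((Finset.univ.filter (fun i => v i < q)).card : ℝ) := by
      have : (Finset.univ.filter (fun i => v i ≤ y))
          ⊆ (Finset.univ.filter (fun i => v i < q)) := by
        intro i hi
        simp only [Finset.mem_filter, Finset.mem_univ, true_and] at hi ⊢
        exact lt_of_le_of_lt hi hyq
      exact_mod_cast Finset.card_le_card this
    have hsum : (∑ i, Y i) ω = ((Finset.univ.filter (fun i => v i < q)).card : ℝ) := by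
      simp only [Finset.sum_apply, hY_def, hg_def, hv]
      rw [Finset.sum_boole]
    rw [hsum]
    exact le_trans hyS hcard
  refine le_trans (measure_mono hsub) ?_
  -- Chernoff bound
  set t : ℝ := 4 * Δ with ht_def
  have ht : 0 ≤ t := by positivity
  have hint : ∀ i, Integrable (fun ω => Real.exp (t * Y i ω)) μ := by
    intro i
    refine Integrable.mono' (integrable_const (Real.exp t))
      (((hYmeas i).const_mul t).exp).aestronglyMeasurable (ae_of_all _ fun ω => ?_)
    rw [Real.norm_eq_abs, abs_of_pos (Real.exp_pos _)]
    apply Real.exp_le_exp.mpr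
    have hY1 : Y i ω ≤ 1 := by
      simp only [hY_def, hg_def]; split <;> norm_num
    calc t * Y i ω ≤ t * 1 := by
          apply mul_le_mul_of_nonneg_left hY1 ht
      _ = t := mul_one t
  have hmgf : ∀ i, mgf (Y i) μ t ≤ Real.exp (t ^ 2 / 8 + t * (α - Δ)) := by
    intro i
    have hA : MeasurableSet {ω | X i ω < q} := (hmeas i) measurableSet_Iio
    have hμA : μ {ω | X i ω < q} = D (Set.Iio q) := by
      rw [← hid i, Measure.map_apply (hmeas i) measurableSet_Iio]
      rfl
    have hfeq : (fun ω => Real.exp (t * Y i ω)) =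
        fun ω => Set.indicator {ω | X i ω < q} (fun _ => Real.exp t - 1) ω + 1 := by
      funext ω
      by_cases h : X i ω < q
      · simp [hY_def, hg_def, h, Set.indicator_of_mem, Set.mem_setOf_eq]
      · simp [hY_def, hg_def, h, Set.indicator_of_notMem, Set.mem_setOf_eq]
    have hmgf_eq : mgf (Y i) μ t
        = (Real.exp t - 1) * (μ {ω | X i ω < q}).toReal + 1 := by
      rw [mgf, hfeq, integral_add ((integrable_const _).indicator hA) (integrable_const 1),
        integral_indicator_const _ hA, integral_const]
      simp [measure_univ, mul_comm, measureReal_def]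
    rw [hmgf_eq, hμA]
    have hp0 : (0 : ℝ) ≤ (D (Set.Iio q)).toReal := ENNReal.toReal_nonneg
    have he1 : (1 : ℝ) ≤ Real.exp t := by
      rw [← Real.exp_zero]; exact Real.exp_le_exp.mpr ht
    have hb := bernoulli_mgf_bound hαΔ.le (by linarith) ht
    nlinarith [hkey]
  have hch := measure_ge_le_exp_mul_mgf (μ := μ) (X := ∑ i, Y i) (α * n) ht
    (hYindep.integrable_exp_mul_sum hYmeas (fun i _ => hint i))
  rw [hYindep.mgf_sum hYmeas] at hch
  have hprod : ∏ i, mgf (Y i) μ t ≤ (Real.exp (t ^ 2 / 8 + t * (α - Δ))) ^ n := by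
    calc ∏ i, mgf (Y i) μ t
        ≤ ∏ _i : Fin n, Real.exp (t ^ 2 / 8 + t * (α - Δ)) :=
          Finset.prod_le_prod (fun i _ => mgf_nonneg) (fun i _ => hmgf i)
      _ = _ := by rw [Finset.prod_const, Finset.card_univ, Fintype.card_fin]
  have hfinal : (μ {ω | α * n ≤ (∑ i, Y i) ω}).toReal ≤ β := by
    refine le_trans hch ?_
    have hexp : Real.exp (-t * (α * n)) * (Real.exp (t ^ 2 / 8 + t * (α - Δ))) ^ n
        = Real.exp (-(2 * Δ ^ 2) * n) := by
      rw [← Real.exp_nat_mul, ← Real.exp_add]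
      congr 1
      simp only [ht_def]
      ring
    calc Real.exp (-t * (α * n)) * ∏ i, mgf (Y i) μ t
        ≤ Real.exp (-t * (α * n)) * (Real.exp (t ^ 2 / 8 + t * (α - Δ))) ^ n := by
          apply mul_le_mul_of_nonneg_left hprod (Real.exp_pos _).le
      _ = Real.exp (-(2 * Δ ^ 2) * n) := hexp
      _ ≤ β := by
          rw [← Real.exp_log hβ0]
          apply Real.exp_le_exp.mpr
          have hlog : Real.log (1 / β) = -Real.log β := by
            rw [one_div, Real.log_inv]
          rw [hlog] at hn
          have h2 : 0 < 2 * Δ ^ 2 := by positivity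
          rw [ge_iff_le, div_mul_eq_mul_div, div_le_iff₀ h2] at hn
          nlinarith
  calc μ {ω | α * n ≤ (∑ i, Y i) ω}
      = ENNReal.ofReal (μ {ω | α * n ≤ (∑ i, Y i) ω}).toReal :=
        (ENNReal.ofReal_toReal (measure_ne_top μ _)).symm
    _ ≤ ENNReal.ofReal β := ENNReal.ofReal_le_ofReal hfinal
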